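/- arXiv:1406.3223 — 5 statements merged into one kernel-verified Lean document; each statement's English description precedes it below -/
import Mathlib

section
/- Suppose S ∩ H = ∅. Then all vertices of H lie in the same connected component of the pair graph G(G,H,S) if and only if the subgroup of H generated by H ∩ (S·S⁻¹) equals H, where S·S⁻¹ = { s t⁻¹ : s, t ∈ S }. -/
open scoped Pointwise Classical

def pairGraph {G : Type*} [Group G] (H : Subgroup G) (S : Set G) : SimpleGraph G :=
  SimpleGraph.fromRel (fun x y => ∃ h ∈ (H : Set G), ∃ s ∈ S, x = h ∧ y = h * s)

section Aux

variable {G : Type*} [Group G] (H : Subgroup G) (S : Set G)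

lemma sNotH (hSH : S ∩ (H : Set G) = ∅) {s : G} (hs : s ∈ S) : s ∉ H := by
  intro h
  exact Set.eq_empty_iff_forall_notMem.mp hSH s ⟨hs, h⟩

lemma adj_mul (hSH : S ∩ (H : Set G) = ∅) {h s : G} (hh : h ∈ H) (hs : s ∈ S) :
    (pairGraph H S).Adj h (h * s) := by
  refine ⟨?_, Or.inl ⟨h, hh, s, hs, rfl, rfl⟩⟩
  intro e
  exact sNotH H S hSH hs (by rw [left_eq_mul.mp e]; exact H.one_mem)

lemma walk_key (hSH : S ∩ (H : Set G) = ∅) {x y : G}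
    (w : (pairGraph H S).Walk x y) (hy : y ∈ H) :
    (x ∈ H → x⁻¹ * y ∈ Subgroup.closure ((H : Set G) ∩ (S * S⁻¹))) ∧
    (∀ h s, h ∈ H → s ∈ S → x = h * s →
      h⁻¹ * y ∈ Subgroup.closure ((H : Set G) ∩ (S * S⁻¹))) := by
  induction w with
  | nil =>
    constructor
    · intro _; simpa using Subgroup.one_mem _
    · intro h s hh hs hxe
      exact absurd ((mul_mem_cancel_left hh).mp (hxe ▸ hy)) (sNotH H S hSH hs)
  | @cons x z y a w ih =>
    obtain ⟨hne, hr⟩ := a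
    constructor
    · intro hx
      rcases hr with ⟨h, hh, s, hs, hxh, hz⟩ | ⟨h, hh, s, hs, hzh, hx'⟩
      · rw [hxh]
        exact (ih hy).2 h s hh hs hz
      · exact absurd ((mul_mem_cancel_left hh).mp (hx' ▸ hx)) (sNotH H S hSH hs)
    · intro h s hh hs hxe
      rcases hr with ⟨h', hh', s', hs', hxh, hz⟩ | ⟨h', hh', t, ht, hzh, hx'⟩
      · rw [← hxh] at hh'
        exact absurd ((mul_mem_cancel_left hh).mp (hxe ▸ hh')) (sNotH H S hSH hs)
      · rw [hzh] at ih
        have hzH : h' ∈ H := hh'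
        have e : h' * t = h * s := hx'.symm.trans hxe
        have hz' : h' = h * s * t⁻¹ := eq_mul_inv_iff_mul_eq.mpr e
        have hst : h⁻¹ * h' = s * t⁻¹ := by rw [hz']; group
        have hmem : h⁻¹ * h' ∈ Subgroup.closure ((H : Set G) ∩ (S * S⁻¹)) := by
          apply Subgroup.subset_closure
          refine ⟨mul_mem (H.inv_mem hh) hzH, ?_⟩
          rw [hst]
          exact Set.mul_mem_mul hs (Set.inv_mem_inv.mpr ht)
        have h2 := (ih hy).1 hzH
        have he : h⁻¹ * y = (h⁻¹ * h') * (h'⁻¹ * y) := by group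
        rw [he]
        exact mul_mem hmem h2

end Aux

/-- if `S ∩ H = ∅`, all vertices of `H` lie in the same connected
component of the pair graph iff `⟨H ∩ S·S⁻¹⟩ = H`. -/
theorem pairGraph_subgroup_connected_iff {G : Type*} [Group G] [Fintype G]
    (H : Subgroup G) (S : Set G) (hSH : S ∩ (H : Set G) = ∅) :
    (∀ h₁ h₂ : G, h₁ ∈ H → h₂ ∈ H → (pairGraph H S).Reachable h₁ h₂) ↔
      Subgroup.closure ((H : Set G) ∩ (S * S⁻¹)) = H := by
  constructor
  · intro hreach
    refine le_antisymm (Subgroup.closure_le H |>.mpr Set.inter_subset_left) ?_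
    intro h hh
    obtain ⟨w⟩ := hreach 1 h H.one_mem hh
    have := (walk_key H S hSH w hh).1 H.one_mem
    simpa using this
  · intro hcl h₁ h₂ h1 h2
    have key : ∀ g ∈ Subgroup.closure ((H : Set G) ∩ (S * S⁻¹)),
        ∀ h ∈ H, (pairGraph H S).Reachable h (h * g) := by
      intro g hg
      induction hg using Subgroup.closure_induction with
      | mem g hgm =>
        obtain ⟨hgH, s, hs, t, ht, hst⟩ := hgm
        rw [Set.mem_inv] at ht
        intro h hh
        have r1 : (pairGraph H S).Reachable h (h * s) :=
          (adj_mul H S hSH hh hs).reachable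
        have hhg : h * g ∈ H := mul_mem hh hgH
        have r2 : (pairGraph H S).Reachable (h * g) ((h * g) * t⁻¹) :=
          (adj_mul H S hSH hhg ht).reachable
        have : (h * g) * t⁻¹ = h * s := by rw [← hst]; group
        rw [this] at r2
        exact r1.trans r2.symm
      | one => intro h hh; simpa using SimpleGraph.Reachable.refl h
      | mul g₁ g₂ hg₁ hg₂ ih₁ ih₂ =>
        intro h hh
        have hg₁H : g₁ ∈ H := hcl ▸ hg₁
        have r1 := ih₁ h hh
        have r2 := ih₂ (h * g₁) (mul_mem hh hg₁H)
        rw [mul_assoc] at r2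
        exact r1.trans r2
      | inv g hg ih =>
        intro h hh
        have hgH : g ∈ H := hcl ▸ hg
        have r := ih (h * g⁻¹) (mul_mem hh (H.inv_mem hgH))
        have : h * g⁻¹ * g = h := by group
        rw [this] at r
        exact r.symm
    have hmem : h₁⁻¹ * h₂ ∈ Subgroup.closure ((H : Set G) ∩ (S * S⁻¹)) := by
      rw [hcl]; exact mul_mem (H.inv_mem h1) h2
    have := key _ hmem h₁ h1
    simpa using this
end

section
/- Suppose S ∩ H = ∅. The pair graph G(G,H,S) is connected if and only if ⟨H ∩ S·S⁻¹⟩ = H and S contains a representative of every right coset of H in G other than H itself. -/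
open scoped Pointwise Classical

/-- if `S ∩ H = ∅`, the pair graph is connected iff
`⟨H ∩ S·S⁻¹⟩ = H` and `S` contains a representative of every right coset of
`H` other than `H` itself. -/
theorem pairGraph_connected_iff_of_disjoint {G : Type*} [Group G] [Fintype G]
    (H : Subgroup G) (S : Set G) (hSH : S ∩ (H : Set G) = ∅) :
    (pairGraph H S).Connected ↔
      (Subgroup.closure ((H : Set G) ∩ (S * S⁻¹)) = H ∧
        ∀ x : G, x ∉ H → ∃ s ∈ S, s * x⁻¹ ∈ H) := by
  have hdis : ∀ s ∈ S, s ∉ H := by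
    intro s hs hsh
    have : s ∈ S ∩ (H : Set G) := ⟨hs, hsh⟩
    rw [hSH] at this
    exact this
  have hadj : ∀ (y s : G), y ∈ H → s ∈ S → (pairGraph H S).Adj y (y * s) := by
    intro y s hy hs
    rw [pairGraph, SimpleGraph.fromRel_adj]
    refine ⟨?_, Or.inl ⟨y, hy, s, hs, rfl, rfl⟩⟩
    intro h
    exact hdis s hs (by rw [(left_eq_mul).mp h]; exact H.one_mem)
  set K := Subgroup.closure ((H : Set G) ∩ (S * S⁻¹)) with hKdef
  have hKH : K ≤ H := (Subgroup.closure_le _).mpr (fun x hx => hx.1)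
  constructor
  · intro hc
    -- step lemma along edges
    have hstep : ∀ v w : G, (pairGraph H S).Adj v w →
        ((v ∈ H → v ∈ K) ∧ (v ∉ H → ∃ s ∈ S, v * s⁻¹ ∈ K)) →
        ((w ∈ H → w ∈ K) ∧ (w ∉ H → ∃ s ∈ S, w * s⁻¹ ∈ K)) := by
      intro v w hvw hP
      rw [pairGraph, SimpleGraph.fromRel_adj] at hvw
      obtain ⟨hne, h | h⟩ := hvw
      · obtain ⟨h0, hh0, s, hs, hv, hw⟩ := h
        subst hv; subst hw
        have hwH : v * s ∉ H := by
          intro hmem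
          exact hdis s hs (by simpa using H.mul_mem (H.inv_mem hh0) hmem)
        refine ⟨fun hw => absurd hw hwH, fun _ => ⟨s, hs, ?_⟩⟩
        rw [mul_inv_cancel_right]
        exact hP.1 hh0
      · obtain ⟨h0, hh0, s, hs, hv, hw⟩ := h
        subst hv; subst hw
        have hvH : w * s ∉ H := by
          intro hmem
          exact hdis s hs (by simpa using H.mul_mem (H.inv_mem hh0) hmem)
        obtain ⟨t, ht, htK⟩ := hP.2 hvH
        have hgen : t * s⁻¹ ∈ (H : Set G) ∩ (S * S⁻¹) := by
          constructor
          · have h1 : (w * s * t⁻¹) ∈ H := hKH htK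
            have : (w * s * t⁻¹)⁻¹ * w ∈ H := H.mul_mem (H.inv_mem h1) hh0
            simpa [mul_assoc] using this
          · exact ⟨t, ht, s⁻¹, Set.inv_mem_inv.mpr hs, rfl⟩
        have : (w * s * t⁻¹) * (t * s⁻¹) ∈ K :=
          K.mul_mem htK (Subgroup.subset_closure hgen)
        refine ⟨fun _ => by simpa [mul_assoc] using this, fun hw => absurd hh0 hw⟩
    have hwalk : ∀ {u v : G}, (pairGraph H S).Walk u v →
        ((u ∈ H → u ∈ K) ∧ (u ∉ H → ∃ s ∈ S, u * s⁻¹ ∈ K)) →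
        ((v ∈ H → v ∈ K) ∧ (v ∉ H → ∃ s ∈ S, v * s⁻¹ ∈ K)) := by
      intro u v p
      induction p with
      | nil => exact id
      | cons h q ih => exact fun hu => ih (hstep _ _ h hu)
    have hP1 : (1 : G) ∈ H → (1 : G) ∈ K := fun _ => K.one_mem
    have hall : ∀ v : G, (v ∈ H → v ∈ K) ∧ (v ∉ H → ∃ s ∈ S, v * s⁻¹ ∈ K) := by
      intro v
      obtain ⟨p⟩ := hc.preconnected 1 v
      exact hwalk p ⟨hP1, fun h => absurd H.one_mem h⟩
    constructor
    · refine le_antisymm hKH ?_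
      intro h hh
      exact (hall h).1 hh
    · intro x hx
      obtain ⟨s, hs, hK⟩ := (hall x).2 hx
      exact ⟨s, hs, by simpa using H.inv_mem (hKH hK)⟩
  · rintro ⟨hcl, hrep⟩
    rw [SimpleGraph.connected_iff]
    refine ⟨fun u v => ?_, ⟨1⟩⟩
    suffices hre : ∀ x : G, (pairGraph H S).Reachable 1 x from (hre u).symm.trans (hre v)
    have hreachH : ∀ h ∈ H, (pairGraph H S).Reachable 1 h := by
      intro h hh
      have hh' : h ∈ K := hcl.symm ▸ hh
      have key : ∀ (g : G), g ∈ K → ∀ y ∈ H, (pairGraph H S).Reachable y (y * g) := by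
        intro g hg
        induction hg using Subgroup.closure_induction with
        | mem x hx =>
          intro y hy
          obtain ⟨hxH, s, hs, t, ht, hst⟩ := hx
          have hts : t⁻¹ ∈ S := Set.inv_mem_inv.mp (by simpa using ht)
          -- x = s * t, with s ∈ S, t ∈ S⁻¹
          have e1 : (pairGraph H S).Adj y (y * s) := hadj y s hy hs
          have hyx : y * x ∈ H := H.mul_mem hy hxH
          have e2 : (pairGraph H S).Adj (y * x) ((y * x) * t⁻¹) := hadj _ _ hyx hts
          have : (y * x) * t⁻¹ = y * s := by rw [← hst]; group
          rw [this] at e2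
          exact e1.reachable.trans e2.reachable.symm
        | one => intro y hy; simpa using SimpleGraph.Reachable.refl y
        | mul a b ha hb iha ihb =>
          intro y hy
          have haH : a ∈ H := hKH ha
          refine (iha y hy).trans ?_
          have := ihb (y * a) (H.mul_mem hy haH)
          simpa [mul_assoc] using this
        | inv a ha iha =>
          intro y hy
          have haH : a ∈ H := hKH ha
          have := iha (y * a⁻¹) (H.mul_mem hy (H.inv_mem haH))
          simpa using this.symm
      simpa using key h hh' 1 H.one_mem
    intro x
    by_cases hx : x ∈ H
    · exact hreachH x hx
    · obtain ⟨s, hs, hsx⟩ := hrep x hx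
      have hxs : x * s⁻¹ ∈ H := by simpa using H.inv_mem hsx
      have e : (pairGraph H S).Adj (x * s⁻¹) ((x * s⁻¹) * s) := hadj _ _ hxs hs
      rw [inv_mul_cancel_right] at e
      exact (hreachH _ hxs).trans e.reachable
end

section
/- The pair graph G(G,H,S) is connected if and only if ⟨H ∩ ((S ∩ H) ∪ S_O·S_O⁻¹)⟩ = H and S contains a representative of every right coset of H other than H, where S_O = S \ H. -/
open scoped Pointwise Classical

section Aux

variable {G : Type*} [Group G] (H : Subgroup G) (S : Set G)

lemma pairGraph_adj {x y : G} :
    (pairGraph H S).Adj x y ↔ x ≠ y ∧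
      ((∃ h ∈ (H : Set G), ∃ s ∈ S, x = h ∧ y = h * s) ∨
       (∃ h ∈ (H : Set G), ∃ s ∈ S, y = h ∧ x = h * s)) := by
  simp [pairGraph, SimpleGraph.fromRel_adj]

lemma pairGraph_adj_mul {g u v : G} (hg : g ∈ H)
    (h : (pairGraph H S).Adj u v) : (pairGraph H S).Adj (g * u) (g * v) := by
  rw [pairGraph_adj] at h ⊢
  obtain ⟨hne, hrel⟩ := h
  refine ⟨by simpa using hne, ?_⟩
  rcases hrel with ⟨h0, hH, s, hs, rfl, rfl⟩ | ⟨h0, hH, s, hs, rfl, rfl⟩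
  · exact Or.inl ⟨g * u, H.mul_mem hg hH, s, hs, rfl, by group⟩
  · exact Or.inr ⟨g * v, H.mul_mem hg hH, s, hs, rfl, by group⟩

lemma pairGraph_reachable_mul {g u v : G} (hg : g ∈ H)
    (h : (pairGraph H S).Reachable u v) :
    (pairGraph H S).Reachable (g * u) (g * v) := by
  obtain ⟨w⟩ := h
  induction w with
  | nil => exact SimpleGraph.Reachable.refl _
  | cons a _ ih =>
      exact ((pairGraph_adj_mul H S hg a).reachable).trans ih

end Aux

/-- the pair graph is connected iff
`⟨H ∩ ((S ∩ H) ∪ S_O·S_O⁻¹)⟩ = H` (where `S_O = S \ H`) and `S` contains a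
representative of every right coset of `H` other than `H`. -/
theorem pairGraph_connected_iff {G : Type*} [Group G] [Fintype G]
    (H : Subgroup G) (S : Set G)
    (hsym : (S ∩ (H : Set G))⁻¹ = S ∩ (H : Set G)) :
    (pairGraph H S).Connected ↔
      (Subgroup.closure ((H : Set G) ∩
          ((S ∩ (H : Set G)) ∪ ((S \ (H : Set G)) * (S \ (H : Set G))⁻¹))) = H ∧
        ∀ x : G, x ∉ H → ∃ s ∈ S, s * x⁻¹ ∈ H) := by
  set T : Set G := (H : Set G) ∩
      ((S ∩ (H : Set G)) ∪ ((S \ (H : Set G)) * (S \ (H : Set G))⁻¹)) with hT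
  set K : Subgroup G := Subgroup.closure T with hK
  have hKH : K ≤ H := by
    rw [hK]
    exact (Subgroup.closure_le _).2 (Set.inter_subset_left)
  constructor
  · intro hconn
    -- invariant along walks from 1
    have key : ∀ {u v : G}, (pairGraph H S).Walk u v →
        ((u ∈ H → u ∈ K) ∧ (u ∉ H → ∃ s ∈ S \ (H : Set G), u * s⁻¹ ∈ K)) →
        ((v ∈ H → v ∈ K) ∧ (v ∉ H → ∃ s ∈ S \ (H : Set G), v * s⁻¹ ∈ K)) := by
      intro u v w
      induction w with
      | nil => exact id
      | @cons a b c hab p ih =>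
        intro hu
        apply ih
        rw [pairGraph_adj] at hab
        obtain ⟨-, hrel⟩ := hab
        rcases hrel with ⟨h0, hH, s, hs, rfl, rfl⟩ | ⟨h0, hH, s, hs, rfl, rfl⟩
        · -- y = a * s, a ∈ H
          by_cases hsH : s ∈ H
          · have hy : a * s ∈ H := H.mul_mem hH hsH
            refine ⟨fun _ => ?_, fun h => absurd hy h⟩
            have aK : a ∈ K := hu.1 hH
            have hsK : s ∈ K := by
              apply Subgroup.subset_closure
              exact ⟨hsH, Or.inl ⟨hs, hsH⟩⟩
            exact K.mul_mem aK hsK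
          · have hy : a * s ∉ H := by
              intro hmem
              exact hsH (by simpa using H.mul_mem (H.inv_mem hH) hmem)
            refine ⟨fun h => absurd h hy, fun _ => ⟨s, ⟨hs, hsH⟩, ?_⟩⟩
            simpa using hu.1 hH
        · -- x = b * s, target is b ∈ H
          by_cases hsH : s ∈ H
          · have hx : b * s ∈ H := H.mul_mem hH hsH
            refine ⟨fun _ => ?_, fun h => absurd hH h⟩
            have hxK : b * s ∈ K := hu.1 hx
            have hsiK : s⁻¹ ∈ K := by
              apply Subgroup.subset_closure
              have : s⁻¹ ∈ S ∩ (H : Set G) := by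
                rw [← hsym]; simpa using ⟨hs, hsH⟩
              exact ⟨H.inv_mem hsH, Or.inl this⟩
            have := K.mul_mem hxK hsiK
            simpa using this
          · have hx : b * s ∉ H := by
              intro hmem
              exact hsH (by simpa using H.mul_mem (H.inv_mem hH) hmem)
            refine ⟨fun _ => ?_, fun h => absurd hH h⟩
            obtain ⟨s', ⟨hs', hs'H⟩, hK'⟩ := hu.2 hx
            -- b * s * s'⁻¹ ∈ K, and s * s'⁻¹ ∈ H
            have hss' : s * s'⁻¹ ∈ H := by
              have : b⁻¹ * (b * s * s'⁻¹) ∈ H :=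
                H.mul_mem (H.inv_mem hH) (hKH hK')
              simpa [mul_assoc] using this
            have htK : s * s'⁻¹ ∈ K := by
              apply Subgroup.subset_closure
              refine ⟨hss', Or.inr ?_⟩
              exact ⟨s, ⟨hs, hsH⟩, s'⁻¹, by simpa using ⟨hs', hs'H⟩, rfl⟩
            have : (b * s * s'⁻¹) * (s * s'⁻¹)⁻¹ ∈ K :=
              K.mul_mem hK' (K.inv_mem htK)
            simpa [mul_assoc] using this
    have base : ((1 : G) ∈ H → (1 : G) ∈ K) ∧
        ((1 : G) ∉ H → ∃ s ∈ S \ (H : Set G), (1 : G) * s⁻¹ ∈ K) :=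
      ⟨fun _ => K.one_mem, fun h => absurd H.one_mem h⟩
    constructor
    · apply le_antisymm hKH
      intro h hh
      obtain ⟨w⟩ := hconn.preconnected 1 h
      exact (key w base).1 hh
    · intro x hx
      obtain ⟨w⟩ := hconn.preconnected 1 x
      obtain ⟨s, ⟨hs, hsH⟩, hK'⟩ := (key w base).2 hx
      refine ⟨s, hs, ?_⟩
      have : x * s⁻¹ ∈ H := hKH hK'
      simpa using H.inv_mem this
  · rintro ⟨hcl, hcoset⟩
    -- every element of H is reachable from 1
    have reachH : ∀ h ∈ H, (pairGraph H S).Reachable 1 h := by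
      intro h hh
      rw [← hcl] at hh
      induction hh using Subgroup.closure_induction with
      | one => exact SimpleGraph.Reachable.refl _
      | mem t ht =>
        obtain ⟨htH, hcase⟩ := ht
        rcases hcase with ⟨hts, htH'⟩ | ⟨s, ⟨hs, hsH⟩, s', hs', rfl⟩
        · by_cases h1 : t = 1
          · subst h1; exact SimpleGraph.Reachable.refl _
          · refine SimpleGraph.Adj.reachable ?_
            rw [pairGraph_adj]
            exact ⟨Ne.symm h1, Or.inl ⟨1, H.one_mem, t, hts, rfl, (one_mul t).symm⟩⟩
        · -- t = s * s', s ∈ S \ H, s'⁻¹ ∈ S \ H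
          rw [Set.mem_inv] at hs'
          obtain ⟨hs'S, hs'H⟩ := hs'
          have hadj1 : (pairGraph H S).Adj 1 s := by
            rw [pairGraph_adj]
            refine ⟨fun h => hsH (h ▸ H.one_mem), Or.inl ⟨1, H.one_mem, s, hs, rfl, (one_mul s).symm⟩⟩
          have hadj2 : (pairGraph H S).Adj (s * s') s := by
            rw [pairGraph_adj]
            refine ⟨fun h => hsH (h ▸ htH), Or.inl ⟨s * s', htH, s'⁻¹, hs'S, rfl, by group⟩⟩
          exact hadj1.reachable.trans hadj2.reachable.symm
      | mul x y hx hy ihx ihy =>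
        have hxH : x ∈ H := hcl ▸ hx
        have : (pairGraph H S).Reachable x (x * y) := by
          simpa using pairGraph_reachable_mul H S hxH ihy
        exact ihx.trans this
      | inv x hx ih =>
        have hxH : x⁻¹ ∈ H := H.inv_mem (hcl ▸ hx)
        have h2 : (pairGraph H S).Reachable (x⁻¹ * 1) (x⁻¹ * x) :=
          pairGraph_reachable_mul H S hxH ih
        simpa using h2.symm
    haveI : Nonempty G := ⟨1⟩
    refine SimpleGraph.Connected.mk fun u v => ?_
    have reachAll : ∀ x : G, (pairGraph H S).Reachable 1 x := by
      intro x
      by_cases hx : x ∈ H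
      · exact reachH x hx
      · obtain ⟨s, hs, hsx⟩ := hcoset x hx
        have hh : x * s⁻¹ ∈ H := by simpa using H.inv_mem hsx
        have hadj : (pairGraph H S).Adj (x * s⁻¹) x := by
          rw [pairGraph_adj]
          refine ⟨fun h => hx (h ▸ hh), Or.inl ⟨x * s⁻¹, hh, s, hs, rfl, by group⟩⟩
        exact (reachH _ hh).trans hadj.reachable
    exact (reachAll u).symm.trans (reachAll v)
end

section
/- The number of connected components of the pair graph G(G,H,S) equals [H : ⟨H ∩ ((S∩H) ∪ S_O S_O⁻¹)⟩] + |G \ H| − |⋃_{s ∈ S_O} H s|, where S_O = S \ H. -/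
open scoped Pointwise Classical

namespace PGaux

variable {G : Type*} [Group G] (H : Subgroup G) (S : Set G)

/-- generating set -/
def T : Set G := (H : Set G) ∩ ((S ∩ (H : Set G)) ∪ ((S \ (H : Set G)) * (S \ (H : Set G))⁻¹))

def K : Subgroup G := Subgroup.closure (T H S)

abbrev Q := H ⧸ (K H S).subgroupOf H

/-- the "outside" part covered by the graph -/
def U : Set G := ⋃ s ∈ S \ (H : Set G), (H : Set G) * {s}

variable {H S}

lemma mem_U_iff {x : G} : x ∈ U H S ↔ ∃ h ∈ (H : Set G), ∃ s ∈ S \ (H : Set G), x = h * s := by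
  simp only [U, Set.mem_iUnion, Set.mem_mul, Set.mem_singleton_iff]
  constructor
  · rintro ⟨s, hs, h, hh, s', rfl, rfl⟩
    exact ⟨h, hh, s', hs, rfl⟩
  · rintro ⟨h, hh, s, hs, rfl⟩
    exact ⟨s, hs, h, hh, s, rfl, rfl⟩

lemma U_disj {x : G} (hx : x ∈ U H S) : x ∉ H := by
  rcases mem_U_iff.mp hx with ⟨h, hh, s, hs, rfl⟩
  intro hmem
  have : h⁻¹ * (h * s) ∈ H := H.mul_mem (H.inv_mem hh) hmem
  rw [inv_mul_cancel_left] at this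
  exact hs.2 this

lemma coset_eq {h₁ h₂ s₁ s₂ : G} (hh₁ : h₁ ∈ H) (hh₂ : h₂ ∈ H)
    (hs₁ : s₁ ∈ S \ (H : Set G)) (hs₂ : s₂ ∈ S \ (H : Set G)) (heq : h₁ * s₁ = h₂ * s₂) :
    (QuotientGroup.mk ⟨h₁, hh₁⟩ : Q H S) = QuotientGroup.mk ⟨h₂, hh₂⟩ := by
  rw [QuotientGroup.eq]
  have hmem : h₁⁻¹ * h₂ ∈ H := H.mul_mem (H.inv_mem hh₁) hh₂
  have key : h₁⁻¹ * h₂ = s₁ * s₂⁻¹ := by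
    have h2 : h₂ = h₁ * s₁ * s₂⁻¹ := eq_mul_inv_of_mul_eq heq.symm
    rw [h2]; group
  have : h₁⁻¹ * h₂ ∈ T H S := by
    refine ⟨hmem, Or.inr ?_⟩
    rw [key]
    exact Set.mul_mem_mul hs₁ (Set.inv_mem_inv.mpr hs₂)
  have hK : h₁⁻¹ * h₂ ∈ K H S := Subgroup.subset_closure this
  exact Subgroup.mem_subgroupOf.mpr hK

open Classical in
/-- component invariant -/
noncomputable def c (H : Subgroup G) (S : Set G) (x : G) : Q H S ⊕ G :=
  if hx : x ∈ H then Sum.inl (QuotientGroup.mk ⟨x, hx⟩)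
  else if hu : x ∈ U H S then
    Sum.inl (QuotientGroup.mk ⟨(mem_U_iff.mp hu).choose, (mem_U_iff.mp hu).choose_spec.1⟩)
  else Sum.inr x

lemma c_of_mem {x : G} (hx : x ∈ H) : c H S x = Sum.inl (QuotientGroup.mk ⟨x, hx⟩) := by
  simp [c, hx]

lemma c_of_U {h s : G} (hh : h ∈ H) (hs : s ∈ S \ (H : Set G)) :
    c H S (h * s) = Sum.inl (QuotientGroup.mk ⟨h, hh⟩ : Q H S) := by
  have hu : h * s ∈ U H S := mem_U_iff.mpr ⟨h, hh, s, hs, rfl⟩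
  have hnot : h * s ∉ H := U_disj hu
  simp only [c, dif_neg hnot, dif_pos hu]
  obtain ⟨hh', s', hs', heq⟩ := (mem_U_iff.mp hu).choose_spec
  exact congrArg Sum.inl (coset_eq _ hh hs' hs heq.symm)

lemma c_of_not {x : G} (hx : x ∉ H) (hu : x ∉ U H S) : c H S x = Sum.inr x := by
  simp [c, hx, hu]

lemma c_adj {x y : G} (hadj : (pairGraph H S).Adj x y) : c H S x = c H S y := by
  have main : ∀ a b : G, (∃ h ∈ (H : Set G), ∃ s ∈ S, a = h ∧ b = h * s) →
      c H S a = c H S b := by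
    rintro a b ⟨h', hh, s, hs, rfl, rfl⟩
    by_cases hsH : s ∈ (H : Set G)
    · rw [c_of_mem hh, c_of_mem (H.mul_mem hh hsH)]
      refine congrArg Sum.inl ?_
      rw [QuotientGroup.eq]
      have hsH' : s ∈ (H : Set G) := hsH
      have hK : a⁻¹ * (a * s) ∈ K H S := by
        rw [inv_mul_cancel_left]
        exact Subgroup.subset_closure ⟨hsH', Or.inl ⟨hs, hsH'⟩⟩
      exact Subgroup.mem_subgroupOf.mpr hK
    · rw [c_of_mem hh, c_of_U hh ⟨hs, hsH⟩]
  rcases hadj with ⟨-, h | h⟩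
  · exact main _ _ h
  · exact (main _ _ h).symm

lemma c_reachable {x y : G} (h : (pairGraph H S).Reachable x y) : c H S x = c H S y := by
  obtain ⟨w⟩ := h
  induction w with
  | nil => rfl
  | cons hadj p ih => exact (c_adj hadj).trans ih

lemma reachable_mul_K {k : G} (hk : k ∈ K H S) :
    ∀ h : G, h ∈ H → (pairGraph H S).Reachable h (h * k) := by
  have hKH : K H S ≤ H := (Subgroup.closure_le H).mpr (fun x hx => hx.1)
  induction hk using Subgroup.closure_induction with
  | mem t ht =>
    intro h hh
    obtain ⟨htH, hcase⟩ := ht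
    rcases hcase with ⟨htS, -⟩ | hmul
    · by_cases hne : h = h * t
      · rw [← hne]
      · exact SimpleGraph.Adj.reachable
          ⟨hne, Or.inl ⟨h, hh, t, htS, rfl, rfl⟩⟩
    · -- t = s₁ * s₂ with s₁ ∈ S \ H, s₂⁻¹ ∈ S \ H
      rw [Set.mem_mul] at hmul
      obtain ⟨s₁, hs₁, s₂, hs₂, ht⟩ := hmul
      rw [Set.mem_inv] at hs₂
      subst ht
      have e1 : (pairGraph H S).Adj h (h * s₁) := by
        refine ⟨?_, Or.inl ⟨h, hh, s₁, hs₁.1, rfl, rfl⟩⟩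
        intro hcontra
        have : s₁ = 1 := by rwa [left_eq_mul] at hcontra
        exact hs₁.2 (this ▸ H.one_mem)
      have htH' : h * (s₁ * s₂) ∈ H := H.mul_mem hh htH
      have e2 : (pairGraph H S).Adj (h * (s₁ * s₂)) (h * s₁) := by
        refine ⟨?_, Or.inl ⟨h * (s₁ * s₂), htH', s₂⁻¹, hs₂.1, rfl, ?_⟩⟩
        · intro hcontra
          have : h * s₁ ∈ H := hcontra ▸ htH'
          have : s₁ ∈ H := by simpa using H.mul_mem (H.inv_mem hh) this
          exact hs₁.2 this
        · group
      exact e1.reachable.trans e2.reachable.symm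
  | one => intro h hh; rw [mul_one]
  | mul k₁ k₂ hk₁ hk₂ ih₁ ih₂ =>
    intro h hh
    have h1 : h * k₁ ∈ H := H.mul_mem hh (hKH hk₁)
    have := (ih₁ h hh).trans (ih₂ (h * k₁) h1)
    rwa [mul_assoc] at this
  | inv k hk ih =>
    intro h hh
    have h1 : h * k⁻¹ ∈ H := H.mul_mem hh (H.inv_mem (hKH hk))
    have := ih (h * k⁻¹) h1
    rw [mul_assoc, inv_mul_cancel, mul_one] at this
    exact this.symm

lemma c_inl_reachable {x h : G} {hh : h ∈ H}
    (hc : c H S x = Sum.inl (QuotientGroup.mk ⟨h, hh⟩ : Q H S)) :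
    (pairGraph H S).Reachable x h := by
  by_cases hx : x ∈ H
  · rw [c_of_mem hx] at hc
    have h1 := Sum.inl.inj hc
    rw [QuotientGroup.eq, Subgroup.mem_subgroupOf] at h1
    have h2 : x⁻¹ * h ∈ K H S := h1
    have := reachable_mul_K h2 x hx
    rwa [mul_inv_cancel_left] at this
  · by_cases hu : x ∈ U H S
    · obtain ⟨h', hh', s, hs, rfl⟩ := mem_U_iff.mp hu
      rw [c_of_U hh' hs] at hc
      have hq := Sum.inl.inj hc
      rw [QuotientGroup.eq, Subgroup.mem_subgroupOf] at hq
      have hK : h'⁻¹ * h ∈ K H S := hq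
      have step : (pairGraph H S).Reachable (h' * s) h' := by
        refine (SimpleGraph.Adj.reachable ?_).symm
        refine ⟨?_, Or.inl ⟨h', hh', s, hs.1, rfl, rfl⟩⟩
        intro hcontra
        have : s = 1 := by rwa [left_eq_mul] at hcontra
        exact hs.2 (this ▸ H.one_mem)
      have : (pairGraph H S).Reachable h' h := by
        have := reachable_mul_K hK h' hh'
        rwa [mul_inv_cancel_left] at this
      exact step.trans this
    · rw [c_of_not hx hu] at hc
      exact absurd hc (by simp)

lemma c_eq_reachable {x y : G} (hc : c H S x = c H S y) :
    (pairGraph H S).Reachable x y := by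
  by_cases hx : x ∈ H
  · have hcx := c_of_mem (S := S) hx
    have hcy : c H S y = Sum.inl (QuotientGroup.mk ⟨x, hx⟩ : Q H S) := by rw [← hc, hcx]
    exact (c_inl_reachable hcy).symm
  · by_cases hu : x ∈ U H S
    · obtain ⟨h, hh, s, hs, rfl⟩ := mem_U_iff.mp hu
      have hcx := c_of_U (S := S) hh hs
      have hcy : c H S y = Sum.inl (QuotientGroup.mk ⟨h, hh⟩ : Q H S) := by rw [← hc, hcx]
      have r1 : (pairGraph H S).Reachable (h * s) h := by
        refine (SimpleGraph.Adj.reachable ?_).symm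
        refine ⟨?_, Or.inl ⟨h, hh, s, hs.1, rfl, rfl⟩⟩
        intro hcontra
        have : s = 1 := by rwa [left_eq_mul] at hcontra
        exact hs.2 (this ▸ H.one_mem)
      exact r1.trans (c_inl_reachable hcy).symm
    · rw [c_of_not hx hu] at hc
      by_cases hy : y ∈ H
      · rw [c_of_mem hy] at hc; exact absurd hc (by simp)
      · by_cases hyu : y ∈ U H S
        · obtain ⟨h, hh, s, hs, rfl⟩ := mem_U_iff.mp hyu
          rw [c_of_U hh hs] at hc; exact absurd hc (by simp)
        · rw [c_of_not hy hyu] at hc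
          rw [Sum.inr.inj hc]

lemma range_c : Set.range (c H S) =
    (Sum.inl '' (Set.univ : Set (Q H S))) ∪ (Sum.inr '' (Set.univ \ ((H : Set G) ∪ U H S))) := by
  ext z
  constructor
  · rintro ⟨x, rfl⟩
    by_cases hx : x ∈ H
    · rw [c_of_mem hx]; exact Or.inl ⟨_, trivial, rfl⟩
    · by_cases hu : x ∈ U H S
      · obtain ⟨h, hh, s, hs, rfl⟩ := mem_U_iff.mp hu
        rw [c_of_U hh hs]; exact Or.inl ⟨_, trivial, rfl⟩
      · rw [c_of_not hx hu]
        exact Or.inr ⟨x, ⟨trivial, by simp [hx, hu]⟩, rfl⟩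
  · rintro (⟨q, -, rfl⟩ | ⟨x, ⟨-, hx⟩, rfl⟩)
    · obtain ⟨⟨h, hh⟩, rfl⟩ := QuotientGroup.mk_surjective q
      exact ⟨h, c_of_mem hh⟩
    · simp only [Set.mem_union] at hx
      push_neg at hx
      exact ⟨x, c_of_not hx.1 hx.2⟩

end PGaux

/-- the number of connected components of the pair graph equals
`[H : ⟨H ∩ ((S∩H) ∪ S_O S_O⁻¹)⟩] + |G \ H| − |⋃_{s ∈ S_O} H s|`. -/
theorem pairGraph_card_components {G : Type*} [Group G] [Fintype G]
    (H : Subgroup G) (S : Set G)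
    (hsym : (S ∩ (H : Set G))⁻¹ = S ∩ (H : Set G)) :
    Nat.card (pairGraph H S).ConnectedComponent =
      (Subgroup.closure ((H : Set G) ∩
          ((S ∩ (H : Set G)) ∪ ((S \ (H : Set G)) * (S \ (H : Set G))⁻¹)))).relIndex H
        + (Set.univ \ (H : Set G)).ncard
        - (⋃ s ∈ S \ (H : Set G), (H : Set G) * {s}).ncard := by
  classical
  open PGaux in
  -- the bijection between connected components and the range of `c`
  have hcard : Nat.card (pairGraph H S).ConnectedComponent = Nat.card (Set.range (c H S)) := by
    refine Nat.card_eq_of_bijective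
      (SimpleGraph.ConnectedComponent.lift
        (fun x => (⟨c H S x, Set.mem_range_self x⟩ : Set.range (c H S)))
        (fun v w p _ => Subtype.ext (c_reachable ⟨p⟩))) ⟨?_, ?_⟩
    · intro a b
      refine SimpleGraph.ConnectedComponent.ind₂ (fun x y hxy => ?_) a b
      simp only [SimpleGraph.ConnectedComponent.lift_mk, Subtype.mk.injEq] at hxy
      exact SimpleGraph.ConnectedComponent.sound (c_eq_reachable hxy)
    · rintro ⟨z, x, rfl⟩
      exact ⟨SimpleGraph.connectedComponentMk _ x, rfl⟩
  rw [hcard, range_c, Nat.card_coe_set_eq, Set.ncard_union_eq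
      (by
        rw [Set.disjoint_left]
        rintro z ⟨q, -, rfl⟩ ⟨x, -, h⟩
        exact Sum.inl_ne_inr h.symm)
      (Set.toFinite _) (Set.toFinite _),
    Set.ncard_image_of_injective _ Sum.inl_injective,
    Set.ncard_image_of_injective _ Sum.inr_injective, Set.ncard_univ]
  have hUsub : PGaux.U H S ⊆ Set.univ \ (H : Set G) := fun x hx => ⟨trivial, U_disj hx⟩
  have hrw : Set.univ \ ((H : Set G) ∪ PGaux.U H S) = (Set.univ \ (H : Set G)) \ PGaux.U H S := by
    rw [Set.diff_diff]
  rw [hrw, Set.ncard_diff hUsub (Set.toFinite _)]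
  have hle : (PGaux.U H S).ncard ≤ (Set.univ \ (H : Set G)).ncard :=
    Set.ncard_le_ncard hUsub (Set.toFinite _)
  have hrelindex : (PGaux.K H S).relIndex H = Nat.card (PGaux.Q H S) := rfl
  have hKdef : PGaux.K H S = Subgroup.closure ((H : Set G) ∩
      ((S ∩ (H : Set G)) ∪ ((S \ (H : Set G)) * (S \ (H : Set G))⁻¹))) := rfl
  have hUdef : PGaux.U H S = ⋃ s ∈ S \ (H : Set G), (H : Set G) * {s} := rfl
  rw [← hKdef, ← hUdef, ← hrelindex]
  omega
end

section
/- For a nontrivial pair graph G(G,H,S), 0 is an eigenvalue of the adjacency matrix with multiplicity at least |G| − |H| − min(|⋃_{s ∈ S_O} Hs|, |H|), where S_O = S \ H. -/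
open scoped Pointwise Classical



noncomputable section PairGraphAux

variable {G : Type*}

/-- The submodule of functions supported on `F`. -/
def suppSubmodule (F : Set G) : Submodule ℝ (G → ℝ) where
  carrier := {f | ∀ y, f y ≠ 0 → y ∈ F}
  add_mem' := by
    intro a b ha hb y hy
    by_contra hyF
    have ha' : a y = 0 := by by_contra h; exact hyF (ha y h)
    have hb' : b y = 0 := by by_contra h; exact hyF (hb y h)
    exact hy (by simp [ha', hb'])
  zero_mem' := by intro y hy; simp at hy
  smul_mem' := by
    intro c f hf y hy
    refine hf y fun h => hy ?_
    simp [h]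

@[simp] lemma mem_suppSubmodule {F : Set G} {f : G → ℝ} :
    f ∈ suppSubmodule F ↔ ∀ y, f y ≠ 0 → y ∈ F := Iff.rfl

/-- Projection killing the coordinates in `F`. -/
def projOff (F : Set G) : (G → ℝ) →ₗ[ℝ] (G → ℝ) where
  toFun f := fun y => if y ∈ F then 0 else f y
  map_add' f g := by funext y; by_cases hy : y ∈ F <;> simp [hy]
  map_smul' c f := by funext y; by_cases hy : y ∈ F <;> simp [hy]

@[simp] lemma projOff_apply (F : Set G) (f : G → ℝ) (y : G) :
    projOff F f y = if y ∈ F then 0 else f y := rfl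

lemma single_eq_smul (x : G) (c : ℝ) :
    (Pi.single x c : G → ℝ) = c • (Pi.single x (1:ℝ) : G → ℝ) := by
  funext z
  simp [Pi.single_apply, mul_ite]

lemma mem_span_single_of_supp [Fintype G] {F : Set G} {f : G → ℝ} (h : ∀ y, f y ≠ 0 → y ∈ F) :
    f ∈ Submodule.span ℝ ((fun y => Pi.single y (1:ℝ)) '' F) := by
  rw [← Finset.univ_sum_single f]
  refine Submodule.sum_mem _ fun y _ => ?_
  by_cases hy : f y = 0
  · simp [hy]
  · rw [single_eq_smul]
    exact Submodule.smul_mem _ _ (Submodule.subset_span ⟨y, h y hy, rfl⟩)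

lemma finrank_span_single_le (F : Set G) (hF : F.Finite) :
    Module.finrank ℝ
      (Submodule.span ℝ ((fun y => Pi.single y (1:ℝ)) '' F) : Submodule ℝ (G → ℝ))
    ≤ F.ncard := by
  haveI := hF.fintype
  haveI := (hF.image (fun y => Pi.single y (1:ℝ))).fintype
  calc Module.finrank ℝ (Submodule.span ℝ ((fun y => Pi.single y (1:ℝ)) '' F) : Submodule ℝ (G → ℝ))
      ≤ ((fun y => Pi.single y (1:ℝ)) '' F).toFinset.card := finrank_span_le_card _
    _ = ((fun y => Pi.single y (1:ℝ)) '' F).ncard := (Set.ncard_eq_toFinset_card' _).symm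
    _ ≤ F.ncard := Set.ncard_image_le hF

lemma finrank_suppSubmodule_le [Fintype G] (F : Set G) (hF : F.Finite) :
    Module.finrank ℝ (suppSubmodule F) ≤ F.ncard := by
  haveI := FiniteDimensional.span_of_finite ℝ (hF.image (fun y => Pi.single y (1:ℝ)))
  refine le_trans (Submodule.finrank_mono ?_) (finrank_span_single_le F hF)
  intro f hf
  exact mem_span_single_of_supp hf

end PairGraphAux

/-- for a nontrivial pair graph, `0` is an eigenvalue with
multiplicity at least `|G| − |H| − min(|⋃_{s ∈ S_O} Hs|, |H|)`. -/
theorem pairGraph_zero_eigenvalue_multiplicity {G : Type*} [Group G] [Fintype G]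
    (H : Subgroup G) (S : Set G) (hS : S.Nonempty) (hH : H ≠ ⊤)
    (hsym : (S ∩ (H : Set G))⁻¹ = S ∩ (H : Set G))
    (T : Module.End ℝ (G → ℝ))
    (hT : T = Matrix.toLin' ((pairGraph H S).adjMatrix ℝ)) :
    Fintype.card G - Nat.card H
        - min (⋃ s ∈ S \ (H : Set G), (H : Set G) * {s}).ncard (Nat.card H)
      ≤ Module.finrank ℝ (Module.End.eigenspace T 0) := by
  classical
  set U : Set G := ⋃ s ∈ S \ (H : Set G), (H : Set G) * {s} with hU
  set e : G → (G → ℝ) := fun y => Pi.single y 1 with he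
  -- adjacency fact
  have adj_of_ne : ∀ x y : G, T (e x) y ≠ 0 → (pairGraph H S).Adj y x := by
    intro x y h
    rw [hT, Matrix.toLin'_apply, Matrix.mulVec_single] at h
    simp only [MulOpposite.op_one, one_smul, Matrix.col_apply] at h
    by_contra hadj
    rw [SimpleGraph.adjMatrix_apply, if_neg hadj] at h
    exact h rfl
  have fact1 : ∀ x ∉ (H : Set G), ∀ y, T (e x) y ≠ 0 → y ∈ (H : Set G) := by
    intro x hx y h
    have hadj := adj_of_ne x y h
    simp only [pairGraph, SimpleGraph.fromRel_adj] at hadj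
    obtain ⟨-, hrel⟩ := hadj
    rcases hrel with ⟨h', hh', s, hs, rfl, rfl⟩ | ⟨h', hh', s, hs, h1, h2⟩
    · exact hh'
    · exact absurd (h1 ▸ hh') hx
  have fact2 : ∀ x y, y ∉ (H : Set G) → T (e x) y ≠ 0 → y ∈ U := by
    intro x y hy h
    have hadj := adj_of_ne x y h
    simp only [pairGraph, SimpleGraph.fromRel_adj] at hadj
    obtain ⟨-, hrel⟩ := hadj
    rcases hrel with ⟨h', hh', s, hs, h1, h2⟩ | ⟨h', hh', s, hs, h1, h2⟩
    · exact absurd (h1 ▸ hh') hy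
    · have hsH : s ∉ (H : Set G) := fun hsmem => hy (h2 ▸ mul_mem hh' hsmem)
      refine Set.mem_biUnion (show s ∈ S \ (H : Set G) from ⟨hs, hsH⟩) ?_
      rw [h2]
      exact Set.mul_mem_mul hh' (Set.mem_singleton s)
  -- submodules
  set P : Submodule ℝ (G → ℝ) := suppSubmodule (H : Set G) with hP
  set M : Submodule ℝ (G → ℝ) := Submodule.map ((projOff (H : Set G)) ∘ₗ (T : (G → ℝ) →ₗ[ℝ] (G → ℝ))) P with hM
  -- decomposition of T v
  have hTv : ∀ v : G → ℝ, T v = ∑ x : G, v x • T (e x) := by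
    intro v
    conv_lhs => rw [← Finset.univ_sum_single v]
    rw [map_sum]
    refine Finset.sum_congr rfl fun x _ => ?_
    rw [single_eq_smul, map_smul]
  have hrange : LinearMap.range (T : (G → ℝ) →ₗ[ℝ] (G → ℝ)) ≤ P ⊔ M := by
    rintro _ ⟨v, rfl⟩
    rw [hTv v]
    refine Submodule.sum_mem _ fun x _ => Submodule.smul_mem _ _ ?_
    by_cases hx : x ∈ (H : Set G)
    · have hdecomp : T (e x) = (T (e x) - projOff (H : Set G) (T (e x))) + projOff (H : Set G) (T (e x)) := by
        ring
      rw [hdecomp]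
      refine Submodule.add_mem _ (Submodule.mem_sup_left ?_) (Submodule.mem_sup_right ?_)
      · intro y hy
        by_contra hyH
        exact hy (by simp [hyH])
      · exact ⟨e x, fun y hy => by
          have : y = x := by
            by_contra hne
            exact hy (Pi.single_eq_of_ne hne 1)
          rwa [this], rfl⟩
    · exact Submodule.mem_sup_left (fun y hy => fact1 x hx y hy)
  -- M is supported on U
  have hMU : M ≤ suppSubmodule U := by
    rintro _ ⟨p, hp, rfl⟩ y hy
    have hyH : y ∉ (H : Set G) := fun h => hy (by simp [h])
    have hTp : T p y ≠ 0 := by simpa [hyH] using hy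
    have hp' : T p y = ∑ x : G, p x * T (e x) y := by
      rw [hTv p, Finset.sum_apply]
      refine Finset.sum_congr rfl fun x _ => ?_
      simp
    rw [hp'] at hTp
    obtain ⟨x, -, hx⟩ := Finset.exists_ne_zero_of_sum_ne_zero hTp
    exact fact2 x y hyH (right_ne_zero_of_mul hx)
  -- cardinality facts
  have hHfin : (H : Set G).Finite := Set.toFinite _
  have hUfin : U.Finite := Set.toFinite _
  have hHcard : (H : Set G).ncard = Nat.card H := rfl
  -- finrank bounds
  have hPfin : Module.finrank ℝ P ≤ Nat.card H := by
    rw [← hHcard]; exact finrank_suppSubmodule_le _ hHfin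
  have hMfin : Module.finrank ℝ M ≤ min U.ncard (Nat.card H) := by
    refine le_min ?_ ?_
    · exact le_trans (Submodule.finrank_mono hMU) (finrank_suppSubmodule_le _ hUfin)
    · exact le_trans (Submodule.finrank_map_le _ _) hPfin
  have hrankT : Module.finrank ℝ (LinearMap.range (T : (G → ℝ) →ₗ[ℝ] (G → ℝ)))
      ≤ Nat.card H + min U.ncard (Nat.card H) := by
    refine le_trans (Submodule.finrank_mono hrange) ?_
    exact le_trans (Submodule.finrank_add_le_finrank_add_finrank P M) (add_le_add hPfin hMfin)
  have hrn := LinearMap.finrank_range_add_finrank_ker (T : (G → ℝ) →ₗ[ℝ] (G → ℝ))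
  rw [Module.finrank_fintype_fun_eq_card] at hrn
  rw [Module.End.eigenspace_zero]
  omega
end
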